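/- arXiv:0912.2933 — 5 statements merged into one kernel-verified Lean document; each statement's English description precedes it below -/
import Mathlib

section
/- Let K be a field of prime characteristic p and C a cyclic group of order q = p^k with k ≥ 1. For every n with 0 < n < q, the trivial one-dimensional K[C]-module is not isomorphic to a direct summand of the exterior power ⋀^n(K[C]) of the regular module; that is, there is no K[C]-module M with ⋀^n(K[C]) ≅ V_1 ⊕ M, where V_1 is the one-dimensional trivial module. -/
/-! Auxiliary: the linear map induced on `n`-th exterior powers (graded pieces of the
exterior algebra) by a linear map, i.e. the functoriality of `⋀[K]^n`. -/

theorem submodule_pow_mono {R A : Type*} [CommSemiring R] [Semiring A] [Algebra R A]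
    {p q : Submodule R A} (h : p ≤ q) : ∀ n : ℕ, p ^ n ≤ q ^ n := by
  intro n
  induction n with
  | zero => simp
  | succ n ih => rw [pow_succ, pow_succ]; exact mul_le_mul' ih h

theorem map_mem_exteriorPower {R : Type*} [CommRing R] {M N : Type*}
    [AddCommGroup M] [Module R M] [AddCommGroup N] [Module R N]
    (n : ℕ) (f : M →ₗ[R] N) :
    ∀ x ∈ ⋀[R]^n M, ExteriorAlgebra.map f x ∈ ⋀[R]^n N := by
  intro x hx
  have h : Submodule.map (ExteriorAlgebra.map f).toLinearMap (⋀[R]^n M) ≤ ⋀[R]^n N := by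
    show Submodule.map _ ((LinearMap.range (ExteriorAlgebra.ι R (M := M))) ^ n) ≤
      (LinearMap.range (ExteriorAlgebra.ι R (M := N))) ^ n
    rw [Submodule.map_pow, ExteriorAlgebra.ι_range_map_map]
    refine submodule_pow_mono ?_ n
    exact Submodule.map_le_iff_le_comap.2 (fun z _ => LinearMap.mem_range_self _ z)
  exact h ⟨x, hx, rfl⟩

/-- The `K`-linear map `⋀^n f : ⋀^n M → ⋀^n N` induced functorially by `f : M → N`. -/
noncomputable def epMap {R : Type*} [CommRing R] {M N : Type*}
    [AddCommGroup M] [Module R M] [AddCommGroup N] [Module R N]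
    (n : ℕ) (f : M →ₗ[R] N) : (⋀[R]^n M) →ₗ[R] (⋀[R]^n N) :=
  (ExteriorAlgebra.map f).toLinearMap.restrict (map_mem_exteriorPower n f)

open ExteriorAlgebra

set_option linter.unusedSectionVars false

noncomputable section Aux
variable (K : Type) [Field K] {C : Type} [CommGroup C] [Fintype C] [LinearOrder C] {n : ℕ}

/-- coordinate functional on the monoid algebra -/
def coordL {K : Type} [Field K] (c : C) : MonoidAlgebra K C →ₗ[K] K :=
  (Finsupp.lapply c).comp (MonoidAlgebra.coeffLinearEquiv K).toLinearMap

@[simp] lemma coordL_single {K : Type} [Field K] (c d : C) (r : K) :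
    coordL (K := K) c (MonoidAlgebra.single d r) = if d = c then r else 0 := by
  classical
  show (MonoidAlgebra.single d r).coeff c = _
  simp [MonoidAlgebra.coeff_single, Finsupp.single_apply]

abbrev XX (C : Type) [Fintype C] (n : ℕ) := {s : Finset C // s.card = n}

/-- wedge of basis vectors indexed by a sorted finset -/
def ES (S : XX C n) : ExteriorAlgebra K (MonoidAlgebra K C) :=
  ιMulti K n fun i => MonoidAlgebra.single (S.1.orderEmbOfFin S.2 i) (1 : K)

def wES (S : XX C n) : ⋀[K]^n (MonoidAlgebra K C) :=
  ⟨ES K S, ιMulti_range K n (Set.mem_range_self _)⟩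

/-- the alternating "minor determinant" functional -/
def aT (T : XX C n) : (MonoidAlgebra K C) [⋀^Fin n]→ₗ[K] K :=
  (Matrix.detRowAlternating (R := K) (n := Fin n)).compLinearMap
    (LinearMap.pi fun i => coordL (T.1.orderEmbOfFin T.2 i))

def Phi (T : XX C n) : ExteriorAlgebra K (MonoidAlgebra K C) →ₗ[K] K :=
  liftAlternating (Function.update (fun _ => 0) n (aT K T))

lemma Phi_apply_ιMulti (T : XX C n) (v : Fin n → MonoidAlgebra K C) :
    Phi K T (ιMulti K n v) = aT K T v := by
  rw [Phi, liftAlternating_apply_ιMulti, Function.update_self]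

lemma aT_apply (T : XX C n) (v : Fin n → MonoidAlgebra K C) :
    aT K T v = Matrix.det (Matrix.of fun i j => (v i).coeff (T.1.orderEmbOfFin T.2 j)) := rfl

lemma Phi_ES (T S : XX C n) : Phi K T (ES K S) = if S = T then 1 else 0 := by
  classical
  unfold ES
  rw [Phi_apply_ιMulti, aT_apply]
  rcases eq_or_ne S T with rfl | hST
  · rw [if_pos rfl]
    have h : (Matrix.of fun i j => (MonoidAlgebra.single (S.1.orderEmbOfFin S.2 i) (1:K)).coeff
        (S.1.orderEmbOfFin S.2 j)) = (1 : Matrix (Fin n) (Fin n) K) := by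
      ext i j
      show coordL (K := K) _ (MonoidAlgebra.single _ _) = _
      rw [coordL_single]
      simp [(S.1.orderEmbOfFin S.2).injective.eq_iff, Matrix.one_apply, eq_comm]
    rw [h, Matrix.det_one]
  · rw [if_neg hST]
    -- find t ∈ T \ S
    have hcards : S.1.card = T.1.card := by rw [S.2, T.2]
    have hTS : ¬ T.1 ⊆ S.1 := by
      intro hsub
      exact hST (Subtype.ext ((Finset.eq_of_subset_of_card_le hsub hcards.le).symm))
    obtain ⟨t, htT, htS⟩ := Finset.not_subset.1 hTS
    obtain ⟨j₀, rfl⟩ : ∃ j₀, T.1.orderEmbOfFin T.2 j₀ = t := by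
      have : t ∈ Set.range (T.1.orderEmbOfFin T.2) := by
        rw [Finset.range_orderEmbOfFin]; exact htT
      exact this
    apply Matrix.det_eq_zero_of_column_eq_zero j₀
    intro i
    show coordL (K := K) _ (MonoidAlgebra.single _ _) = _
    rw [coordL_single, if_neg]
    intro h; exact htS (h ▸ (Finset.orderEmbOfFin_mem S.1 S.2 i))


lemma exists_smul_eq_ES (v : Fin n → C) (hv : Function.Injective v) :
    ∃ ε : K, ιMulti K n (fun i => MonoidAlgebra.single (v i) (1:K)) =
      ε • ES K ⟨Finset.image v Finset.univ, by
        rw [Finset.card_image_of_injective _ hv, Finset.card_univ, Fintype.card_fin]⟩ := by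
  classical
  set T : XX C n := ⟨Finset.image v Finset.univ, by
        rw [Finset.card_image_of_injective _ hv, Finset.card_univ, Fintype.card_fin]⟩ with hT
  have hmem : ∀ i, v i ∈ T.1 := fun i => Finset.mem_image_of_mem v (Finset.mem_univ i)
  let f : Fin n → Fin n := fun i => (T.1.orderIsoOfFin T.2).symm ⟨v i, hmem i⟩
  have hfinj : Function.Injective f := by
    intro i j h
    apply hv
    have := congrArg (T.1.orderIsoOfFin T.2) h
    simp only [f, OrderIso.apply_symm_apply] at this
    exact congrArg Subtype.val this
  have hfbij : Function.Bijective f := (Finite.injective_iff_bijective).1 hfinj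
  let π : Equiv.Perm (Fin n) := Equiv.ofBijective f hfbij
  have hπ : ∀ i, T.1.orderEmbOfFin T.2 (π i) = v i := by
    intro i
    show (T.1.orderEmbOfFin T.2) (f i) = v i
    rw [← Finset.coe_orderIsoOfFin_apply]
    simp [f]
  have hcomp : (fun i => MonoidAlgebra.single (v i) (1:K)) =
      (fun i => MonoidAlgebra.single (T.1.orderEmbOfFin T.2 i) (1:K)) ∘ π := by
    funext i; simp [Function.comp, hπ]
  rw [hcomp, AlternatingMap.map_perm]
  rcases Int.units_eq_one_or (Equiv.Perm.sign π) with h | h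
  · exact ⟨1, by rw [h, one_smul, one_smul]; rfl⟩
  · refine ⟨-1, ?_⟩
    rw [h, Units.smul_def, Units.val_neg, Units.val_one, neg_one_zsmul, neg_one_smul]
    rfl

lemma mem_span_ES (x : ExteriorAlgebra K (MonoidAlgebra K C)) (hx : x ∈ ⋀[K]^n (MonoidAlgebra K C)) :
    x ∈ Submodule.span K (Set.range (ES K (C := C) (n := n))) := by
  classical
  rw [← ιMulti_span_fixedDegree] at hx
  refine Submodule.span_le.2 ?_ hx
  rintro - ⟨v, rfl⟩
  have hv : ∀ i, v i = ∑ c ∈ (v i).coeff.support, ((v i).coeff c) • MonoidAlgebra.single c (1:K) := by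
    intro i
    conv_lhs => rw [← MonoidAlgebra.sum_coeff_single (v i)]
    rw [Finsupp.sum]
    exact Finset.sum_congr rfl fun c _ => by rw [MonoidAlgebra.smul_single', mul_one]
  have expand := MultilinearMap.map_sum_finset ((ιMulti K n (M := MonoidAlgebra K C)).toMultilinearMap)
      (fun i c => ((v i).coeff c) • MonoidAlgebra.single c (1:K)) (fun i => (v i).coeff.support)
  have hv' : v = fun i => ∑ c ∈ (v i).coeff.support, ((v i).coeff c) • MonoidAlgebra.single c (1:K) :=
    funext hv
  have : (ιMulti K n) v = ∑ r ∈ Fintype.piFinset (fun i => (v i).coeff.support),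
      (ιMulti K n).toMultilinearMap (fun i => ((v i).coeff (r i)) • MonoidAlgebra.single (r i) (1:K)) := by
    conv_lhs => rw [hv']
    exact expand
  rw [this]
  refine Submodule.sum_mem _ fun r _ => ?_
  rw [MultilinearMap.map_smul_univ]
  by_cases hr : Function.Injective r
  · obtain ⟨ε, hε⟩ := exists_smul_eq_ES K r hr
    show (∏ i, (v i).coeff (r i)) • (ιMulti K n) (fun i => MonoidAlgebra.single (r i) (1:K)) ∈ _
    rw [hε]
    exact Submodule.smul_mem _ _ (Submodule.smul_mem _ _
      (Submodule.subset_span (Set.mem_range_self _)))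
  · have : ¬ Function.Injective (fun i => MonoidAlgebra.single (r i) (1:K)) := by
      intro hinj
      exact hr fun i j hij => hinj (by simp [hij])
    show (∏ i, (v i).coeff (r i)) • (ιMulti K n) (fun i => MonoidAlgebra.single (r i) (1:K)) ∈ _
    rw [AlternatingMap.map_eq_zero_of_not_injective _ _ this, smul_zero]
    exact Submodule.zero_mem _


def phiW (T : XX C n) : (⋀[K]^n (MonoidAlgebra K C)) →ₗ[K] K :=
  (Phi K T).comp (Submodule.subtype _)

lemma phiW_wES (T S : XX C n) : phiW K T (wES K S) = if S = T then 1 else 0 := Phi_ES K T S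

lemma span_wES : Submodule.span K (Set.range (wES K (C := C) (n := n))) = ⊤ := by
  refine le_antisymm le_top fun w _ => ?_
  have h1 : (w : ExteriorAlgebra K (MonoidAlgebra K C)) ∈
      Submodule.span K (Set.range (ES K (C := C) (n := n))) := mem_span_ES K _ w.2
  have h2 : Set.range (ES K (C := C) (n := n)) =
      (⋀[K]^n (MonoidAlgebra K C)).subtype '' (Set.range (wES K)) := by
    rw [← Set.range_comp]; rfl
  rw [h2, ← Submodule.map_span] at h1
  obtain ⟨w', hw', hww⟩ := h1
  have : w' = w := Subtype.ext hww
  rwa [← this]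

lemma repr_wES (w : ⋀[K]^n (MonoidAlgebra K C)) :
    w = ∑ S : XX C n, phiW K S w • wES K S := by
  classical
  have : LinearMap.id (R := K) (M := ⋀[K]^n (MonoidAlgebra K C)) =
      ∑ S : XX C n, (phiW K S).smulRight (wES K S) := by
    apply LinearMap.ext_on_range (span_wES K (C := C) (n := n))
    intro T
    simp only [LinearMap.id_apply, LinearMap.sum_apply, LinearMap.smulRight_apply, phiW_wES]
    rw [Finset.sum_congr rfl (fun S _ => by rw [ite_smul, one_smul, zero_smul])]
    rw [Finset.sum_ite_eq Finset.univ T (fun S => wES K S), if_pos (Finset.mem_univ T)]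
  conv_lhs => rw [← LinearMap.id_apply (R := K) w, this]
  simp [LinearMap.sum_apply]


open Pointwise

def fX (g : C) (S : XX C n) : XX C n :=
  ⟨g • S.1, by rw [Finset.card_smul_finset]; exact S.2⟩

lemma fX_injective (g : C) : Function.Injective (fX (C := C) (n := n) g) := by
  intro S T h
  have h1 : g • S.1 = g • T.1 := congrArg Subtype.val h
  have h2 := congrArg (fun s : Finset C => g⁻¹ • s) h1
  simp only [inv_smul_smul] at h2
  exact Subtype.ext h2

/-- the action of `g` on the exterior power -/
abbrev sgm (g : C) : (⋀[K]^n (MonoidAlgebra K C)) →ₗ[K] (⋀[K]^n (MonoidAlgebra K C)) :=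
  epMap n (LinearMap.mulLeft K (MonoidAlgebra.of K C g))

lemma image_orderEmbOfFin (S : XX C n) :
    Finset.image (S.1.orderEmbOfFin S.2) Finset.univ = S.1 := by
  ext x
  simp only [Finset.mem_image]
  constructor
  · rintro ⟨i, -, rfl⟩; exact Finset.orderEmbOfFin_mem _ _ _
  · intro hx
    have : x ∈ Set.range (S.1.orderEmbOfFin S.2) := by
      rw [Finset.range_orderEmbOfFin]; exact hx
    obtain ⟨i, hi⟩ := this
    exact ⟨i, Finset.mem_univ i, hi⟩

lemma sgm_wES (g : C) (S : XX C n) :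
    ∃ ε : K, sgm K g (wES K S) = ε • wES K (fX g S) := by
  classical
  have h1 : (ExteriorAlgebra.map (LinearMap.mulLeft K (MonoidAlgebra.of K C g))) (ES K S)
      = ιMulti K n (fun i => MonoidAlgebra.single (g * S.1.orderEmbOfFin S.2 i) (1:K)) := by
    rw [ES, ExteriorAlgebra.map_apply_ιMulti]
    congr 1
    funext i
    show MonoidAlgebra.of K C g * MonoidAlgebra.single _ 1 = _
    rw [MonoidAlgebra.of_apply, MonoidAlgebra.single_mul_single, one_mul]
  have hinj : Function.Injective (fun i => g * S.1.orderEmbOfFin S.2 i) :=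
    fun i j hij => (S.1.orderEmbOfFin S.2).injective (mul_left_cancel hij)
  obtain ⟨ε, hε⟩ := exists_smul_eq_ES K _ hinj
  have him : Finset.image (fun i => g * S.1.orderEmbOfFin S.2 i) Finset.univ = g • S.1 := by
    have e1 : Finset.image (fun i => g * S.1.orderEmbOfFin S.2 i) Finset.univ
        = Finset.image (fun x => g • x) (Finset.image (S.1.orderEmbOfFin S.2) Finset.univ) := by
      rw [Finset.image_image]; rfl
    rw [e1, image_orderEmbOfFin, Finset.image_smul]
  have hT : (⟨Finset.image (fun i => g * S.1.orderEmbOfFin S.2 i) Finset.univ, by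
      rw [Finset.card_image_of_injective _ hinj, Finset.card_univ, Fintype.card_fin]⟩ : XX C n)
      = fX g S := Subtype.ext him
  rw [hT] at hε
  refine ⟨ε, Subtype.ext ?_⟩
  show (ExteriorAlgebra.map _) (ES K S) = _
  rw [h1, hε]
  rfl

lemma epMap_comp (f f' : MonoidAlgebra K C →ₗ[K] MonoidAlgebra K C) :
    (epMap (R := K) n f) ∘ₗ (epMap n f') = epMap n (f ∘ₗ f') := by
  apply LinearMap.ext
  intro x
  apply Subtype.ext
  show (ExteriorAlgebra.map f) ((ExteriorAlgebra.map f') x) = (ExteriorAlgebra.map (f ∘ₗ f')) x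
  rw [← ExteriorAlgebra.map_comp_map]
  rfl

lemma epMap_id : epMap (R := K) n (LinearMap.id (M := MonoidAlgebra K C)) = LinearMap.id := by
  apply LinearMap.ext
  intro x
  apply Subtype.ext
  show (ExteriorAlgebra.map (LinearMap.id (R := K) (M := MonoidAlgebra K C)))
      (x : ExteriorAlgebra K (MonoidAlgebra K C)) = (x : ExteriorAlgebra K (MonoidAlgebra K C))
  rw [ExteriorAlgebra.map_id]
  rfl

lemma sgm_pow (g : C) (m : ℕ) :
    (sgm K (C := C) (n := n) g) ^ m = epMap n (LinearMap.mulLeft K ((MonoidAlgebra.of K C g) ^ m)) := by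
  induction m with
  | zero => rw [pow_zero, pow_zero, LinearMap.mulLeft_one, epMap_id]; rfl
  | succ m ih =>
      rw [pow_succ, ih, Module.End.mul_eq_comp, epMap_comp, pow_succ, LinearMap.mulLeft_mul]

lemma sgm_pow_eq_one (g : C) (m : ℕ) (hm : g ^ m = 1) :
    (sgm K (C := C) (n := n) g) ^ m = 1 := by
  rw [sgm_pow, ← map_pow, hm, map_one, LinearMap.mulLeft_one, epMap_id]
  rfl


lemma fX_iterate (g : C) (S : XX C n) (i : ℕ) :
    (fX (n := n) g)^[i] S = ⟨g ^ i • S.1, by rw [Finset.card_smul_finset]; exact S.2⟩ := by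
  induction i with
  | zero => exact Subtype.ext (by simp)
  | succ i ih =>
      rw [Function.iterate_succ_apply', ih]
      refine Subtype.ext ?_
      show g • (g ^ i • S.1) = g ^ (i+1) • S.1
      rw [smul_smul, ← pow_succ']

set_option maxHeartbeats 1000000 in
lemma key_lemma (p : ℕ) [Fact p.Prime] [CharP K p] (k : ℕ) (hcard : Fintype.card C = p ^ k)
    (g : C) (hg : ∀ x : C, x ∈ Subgroup.zpowers g) {n : ℕ} (h0 : 0 < n) (h1 : n < p ^ k)
    (φ : (⋀[K]^n (MonoidAlgebra K C)) →ₗ[K] K)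
    (hφ : ∀ x, φ (sgm K g x) = φ x)
    (w : ⋀[K]^n (MonoidAlgebra K C)) (hw : sgm K g w = w) : φ w = 0 := by
  classical
  have hppos : 0 < p := (Fact.out : p.Prime).pos
  have hq0 : 0 < p ^ k := pow_pos hppos k
  have hgq : g ^ (p ^ k) = 1 := by rw [← hcard]; exact pow_card_eq_one
  have hfq : ∀ S : XX C n, (fX (n := n) g)^[p ^ k] S = S := by
    intro S
    rw [fX_iterate, hgq]
    exact Subtype.ext (one_smul _ _)
  choose E hE using fun S : XX C n => sgm_wES K g S
  -- no fixed points
  have hnofix : ∀ S : XX C n, fX g S ≠ S := by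
    intro S hf
    have hS1 : g • S.1 = S.1 := congrArg Subtype.val hf
    have hpow : ∀ i : ℕ, g ^ i • S.1 = S.1 := by
      intro i
      induction i with
      | zero => simp
      | succ i ih => rw [pow_succ', mul_smul, ih, hS1]
    obtain ⟨x₀, hx₀⟩ := Finset.card_pos.1 (by rw [S.2]; exact h0)
    have huniv : ∀ y : C, y ∈ S.1 := by
      intro y
      have hy : y * x₀⁻¹ ∈ Subgroup.zpowers g := hg _
      have hfin : IsOfFinOrder g := isOfFinOrder_of_finite g
      obtain ⟨i, hi⟩ := hfin.mem_powers_iff_mem_zpowers.2 hy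
      have hi' : g ^ i = y * x₀⁻¹ := hi
      have hyi : y = g ^ i * x₀ := by rw [hi', inv_mul_cancel_right]
      have : g ^ i * x₀ ∈ g ^ i • S.1 := by
        have := Finset.smul_mem_smul_finset (a := g ^ i) hx₀
        rwa [smul_eq_mul] at this
      rw [hpow i] at this
      rwa [hyi]
    have hSuniv : S.1 = Finset.univ := Finset.eq_univ_iff_forall.2 huniv
    have : n = p ^ k := by rw [← S.2, hSuniv, Finset.card_univ, hcard]
    omega
  -- coefficient relation
  have hrel : ∀ (w : ⋀[K]^n (MonoidAlgebra K C)), sgm K g w = w →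
      ∀ S, phiW K (fX g S) w = E S * phiW K S w := by
    intro w hw S
    have h1 : sgm K g w = ∑ T : XX C n, phiW K T w • (E T • wES K (fX g T)) := by
      conv_lhs => rw [repr_wES K w]
      rw [map_sum]
      exact Finset.sum_congr rfl fun T _ => by rw [LinearMap.map_smul, hE]
    have h2 : phiW K (fX g S) (sgm K g w) = E S * phiW K S w := by
      rw [h1, map_sum]
      rw [Finset.sum_eq_single S]
      · rw [LinearMap.map_smul, LinearMap.map_smul, phiW_wES, if_pos rfl]
        simp only [smul_eq_mul, mul_one]
        ring
      · intro T _ hTS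
        rw [LinearMap.map_smul, LinearMap.map_smul, phiW_wES, if_neg, smul_zero, smul_zero]
        exact fun h => hTS (fX_injective g h)
      · intro h; exact absurd (Finset.mem_univ S) h
    rw [hw] at h2
    exact h2
  have hφpow : ∀ (i : ℕ) (y : ⋀[K]^n (MonoidAlgebra K C)), φ ((sgm K g ^ i) y) = φ y := by
    intro i
    induction i with
    | zero => intro y; rw [pow_zero, Module.End.one_apply]
    | succ i ih => intro y; rw [pow_succ', Module.End.mul_apply, hφ, ih]
  -- strong induction on support size
  suffices H : ∀ N : ℕ, ∀ w, (Finset.univ.filter fun S : XX C n => phiW K S w ≠ 0).card ≤ N →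
      sgm K g w = w → φ w = 0 from H _ w le_rfl hw
  intro N
  have hzero : ∀ (w : ⋀[K]^n (MonoidAlgebra K C)), (∀ S, phiW K S w = 0) → φ w = 0 := by
    intro w hall
    have : w = 0 := by
      rw [repr_wES K w]
      exact Finset.sum_eq_zero fun S _ => by rw [hall, zero_smul]
    rw [this, map_zero]
  induction N with
  | zero =>
      intro w hcard0 _
      refine hzero w fun S => ?_
      by_contra hS
      have hmem : S ∈ Finset.univ.filter (fun S => phiW K S w ≠ 0) :=
        Finset.mem_filter.2 ⟨Finset.mem_univ _, hS⟩
      have := Finset.card_pos.2 ⟨S, hmem⟩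
      omega
  | succ N ih =>
      intro w hcardN hw
      by_cases hex : ∃ S₀, phiW K S₀ w ≠ 0
      swap
      · push_neg at hex; exact hzero w hex
      obtain ⟨S₀, hS₀⟩ := hex
      set m := Function.minimalPeriod (fX (n := n) g) S₀ with hm
      have hqper : Function.IsPeriodicPt (fX (n := n) g) (p ^ k) S₀ := hfq S₀
      have hm_dvd : m ∣ p ^ k := hqper.minimalPeriod_dvd
      have hm_pos : 0 < m := Function.minimalPeriod_pos_of_mem_periodicPts ⟨p ^ k, hq0, hqper⟩
      have hm_ne1 : m ≠ 1 := fun h =>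
        hnofix S₀ (Function.minimalPeriod_eq_one_iff_isFixedPt.1 (hm ▸ h))
      have hpm : p ∣ m := by
        obtain ⟨j, hj, hmj⟩ := (Nat.dvd_prime_pow (Fact.out : p.Prime)).1 hm_dvd
        cases j with
        | zero => exact absurd (by simpa using hmj) hm_ne1
        | succ j => rw [hmj]; exact dvd_pow_self p (Nat.succ_ne_zero j)
      have hmK : (m : K) = 0 := (CharP.cast_eq_zero_iff K p m).2 hpm
      set D : ℕ → K := fun i => ∏ l ∈ Finset.range i, E ((fX (n := n) g)^[l] S₀) with hD
      have hDiter : ∀ i, (sgm K g ^ i) (wES K S₀) = D i • wES K ((fX (n := n) g)^[i] S₀) := by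
        intro i
        induction i with
        | zero => simp [hD]
        | succ i ih2 =>
            rw [pow_succ', Module.End.mul_apply, ih2, LinearMap.map_smul, hE,
              Function.iterate_succ_apply', smul_smul]
            rw [show D (i+1) = D i * E ((fX (n := n) g)^[i] S₀) from Finset.prod_range_succ _ _]
      have hciter : ∀ i, phiW K ((fX (n := n) g)^[i] S₀) w = D i * phiW K S₀ w := by
        intro i
        induction i with
        | zero => simp [hD]
        | succ i ih2 =>
            rw [Function.iterate_succ_apply', hrel w hw, ih2,
              show D (i+1) = D i * E ((fX (n := n) g)^[i] S₀) from Finset.prod_range_succ _ _]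
            ring
      have hper : (fX (n := n) g)^[m] S₀ = S₀ :=
        Function.isPeriodicPt_minimalPeriod (fX (n := n) g) S₀
      have hDm_pow : ∀ t : ℕ, (sgm K g ^ (m * t)) (wES K S₀) = (D m) ^ t • wES K S₀ := by
        intro t
        induction t with
        | zero => simp
        | succ t ih2 =>
            rw [Nat.mul_succ, pow_add, Module.End.mul_apply, hDiter m, hper, LinearMap.map_smul,
              ih2, smul_smul, ← pow_succ']
      obtain ⟨t, ht⟩ := hm_dvd
      have h1t : (D m) ^ t = 1 := by
        have h2 := hDm_pow t
        rw [← ht, sgm_pow_eq_one K g (p ^ k) hgq, Module.End.one_apply] at h2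
        have h3 := congrArg (phiW K S₀) h2
        rw [LinearMap.map_smul, phiW_wES, if_pos rfl, smul_eq_mul, mul_one] at h3
        exact h3.symm
      have hDm : D m = 1 := by
        have htdvd : t ∣ p ^ k := ⟨m, by rw [ht, mul_comm]⟩
        obtain ⟨s, _, hts⟩ := (Nat.dvd_prime_pow (Fact.out : p.Prime)).1 htdvd
        have h3 : (D m - 1) ^ p ^ s = 0 := by
          rw [sub_pow_char_pow, one_pow, ← hts, h1t, sub_self]
        have h4 := (pow_eq_zero_iff (pow_ne_zero s hppos.ne')).1 h3
        rwa [sub_eq_zero] at h4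
      set x : ⋀[K]^n (MonoidAlgebra K C) := phiW K S₀ w • wES K S₀ with hx
      set v : ⋀[K]^n (MonoidAlgebra K C) := ∑ i ∈ Finset.range m, (sgm K g ^ i) x with hv
      have hφv : φ v = 0 := by
        rw [hv, map_sum, Finset.sum_congr rfl (fun i _ => hφpow i x), Finset.sum_const,
          Finset.card_range, nsmul_eq_mul, hmK, zero_mul]
      have hFm : (sgm K g ^ m) x = x := by
        rw [hx, LinearMap.map_smul, hDiter m, hper, hDm, one_smul]
      have hsv : sgm K g v = v := by
        have e0 : sgm K g v = ∑ i ∈ Finset.range m, (sgm K g ^ (i + 1)) x := by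
          rw [hv, map_sum]
          exact Finset.sum_congr rfl fun i _ => by rw [pow_succ', Module.End.mul_apply]
        have e1 : ∑ i ∈ Finset.range (m + 1), (sgm K g ^ i) x
            = (∑ i ∈ Finset.range m, (sgm K g ^ (i + 1)) x) + (sgm K g ^ 0) x :=
          Finset.sum_range_succ' _ _
        have e2 : ∑ i ∈ Finset.range (m + 1), (sgm K g ^ i) x
            = (∑ i ∈ Finset.range m, (sgm K g ^ i) x) + (sgm K g ^ m) x :=
          Finset.sum_range_succ _ _
        rw [e0]
        have := e1.symm.trans e2
        rw [pow_zero, Module.End.one_apply, hFm] at this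
        rw [hv]
        linear_combination (norm := abel) this
      -- coefficients of v
      have hcv : ∀ T : XX C n, phiW K T v =
          if T ∈ Finset.image (fun i => (fX (n := n) g)^[i] S₀) (Finset.range m)
          then phiW K T w else 0 := by
        intro T
        have hterm : ∀ i, phiW K T ((sgm K g ^ i) x)
            = phiW K S₀ w * D i * (if (fX (n := n) g)^[i] S₀ = T then 1 else 0) := by
          intro i
          rw [hx, LinearMap.map_smul, hDiter i, LinearMap.map_smul, LinearMap.map_smul, phiW_wES]
          simp only [smul_eq_mul]
          ring
        rw [hv, map_sum, Finset.sum_congr rfl fun i _ => hterm i]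
        by_cases hmemT : T ∈ Finset.image (fun i => (fX (n := n) g)^[i] S₀) (Finset.range m)
        · rw [if_pos hmemT]
          obtain ⟨i₀, hi₀, rfl⟩ := Finset.mem_image.1 hmemT
          rw [Finset.mem_range] at hi₀
          rw [Finset.sum_eq_single i₀]
          · rw [if_pos rfl, mul_one, hciter i₀]; ring
          · intro i hi hne
            rw [Finset.mem_range] at hi
            rw [if_neg, mul_zero]
            intro hiter
            exact hne (Function.iterate_injOn_Iio_minimalPeriod
              (Set.mem_Iio.2 hi) (Set.mem_Iio.2 hi₀) hiter)
          · intro h; exact absurd (Finset.mem_range.2 hi₀) h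
        · rw [if_neg hmemT]
          refine Finset.sum_eq_zero fun i hi => ?_
          rw [if_neg, mul_zero]
          intro hiter
          exact hmemT (Finset.mem_image.2 ⟨i, hi, hiter⟩)
      have hS₀mem : S₀ ∈ Finset.image (fun i => (fX (n := n) g)^[i] S₀) (Finset.range m) :=
        Finset.mem_image.2 ⟨0, Finset.mem_range.2 hm_pos, rfl⟩
      have hsub : Finset.univ.filter (fun S : XX C n => phiW K S (w - v) ≠ 0) ⊆
          (Finset.univ.filter (fun S : XX C n => phiW K S w ≠ 0)).erase S₀ := by
        intro T hT
        rw [Finset.mem_filter] at hT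
        obtain ⟨-, hTne⟩ := hT
        rw [map_sub, hcv T] at hTne
        by_cases hmemT : T ∈ Finset.image (fun i => (fX (n := n) g)^[i] S₀) (Finset.range m)
        · rw [if_pos hmemT, sub_self] at hTne
          exact absurd rfl hTne
        · rw [if_neg hmemT, sub_zero] at hTne
          refine Finset.mem_erase.2 ⟨?_, Finset.mem_filter.2 ⟨Finset.mem_univ _, hTne⟩⟩
          intro hTS₀
          exact hmemT (hTS₀ ▸ hS₀mem)
      have hcard' : (Finset.univ.filter (fun S : XX C n => phiW K S (w - v) ≠ 0)).card ≤ N := by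
        have h5 : S₀ ∈ Finset.univ.filter (fun S : XX C n => phiW K S w ≠ 0) :=
          Finset.mem_filter.2 ⟨Finset.mem_univ _, hS₀⟩
        have h6 := Finset.card_erase_of_mem h5
        have h7 := Finset.card_le_card hsub
        omega
      have hwv : sgm K g (w - v) = w - v := by rw [map_sub, hw, hsv]
      have h8 := ih (w - v) hcard' hwv
      have : φ w = φ (w - v) + φ v := by rw [map_sub]; ring
      rw [this, h8, hφv, add_zero]

end Aux

/-- **The trivial module is not a direct summand of `⋀^n K[C]` (Lemma 4.3/4.4 of
Bryant–Johnson).**  Let `K` be a field of prime characteristic `p` and `C` a cyclic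
group of order `q = p^k` with `k ≥ 1`, with generator `g`.  For `0 < n < q` there is no
`K[C]`-module `M` with `⋀^n K[C] ≅ V₁ ⊕ M`, where `V₁` is the one-dimensional trivial
module.  A `K[C]`-module is encoded as a `K`-vector space `M` together with the action
`a` of the generator `g`, an endomorphism satisfying `a ^ q = 1`; an isomorphism of
`K[C]`-modules is a `K`-linear equivalence intertwining the actions of `g` (the action
on `V₁ ⊕ M = K × M` being `id × a`). -/
theorem trivial_not_summand_of_exteriorPower_regular
    (K : Type) [Field K] (p : ℕ) [Fact p.Prime] [CharP K p]
    (C : Type) [CommGroup C] [Fintype C]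
    (k : ℕ) (hk : 1 ≤ k) (hcard : Fintype.card C = p ^ k)
    (g : C) (hg : ∀ x : C, x ∈ Subgroup.zpowers g)
    (n : ℕ) (h0 : 0 < n) (h1 : n < p ^ k) :
    ¬ ∃ (M : Type) (_ : AddCommGroup M) (_ : Module K M) (a : Module.End K M)
        (_ : a ^ (p ^ k) = 1)
        (e : (⋀[K]^n (MonoidAlgebra K C)) ≃ₗ[K] (K × M)),
        ∀ x, e (epMap n (LinearMap.mulLeft K (MonoidAlgebra.of K C g)) x)
          = (LinearMap.prodMap LinearMap.id (a : M →ₗ[K] M)) (e x) := by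
  letI : LinearOrder C := LinearOrder.lift' (Fintype.equivFin C) (Fintype.equivFin C).injective
  rintro ⟨M, _, _, a, ha, e, he⟩
  set w := e.symm (1, 0) with hwdef
  have hew : e w = (1, 0) := e.apply_symm_apply _
  have hw : epMap n (LinearMap.mulLeft K (MonoidAlgebra.of K C g)) w = w := by
    apply e.injective
    rw [he w, hew]
    show (LinearMap.prodMap LinearMap.id (a : M →ₗ[K] M)) (1, 0) = (1, 0)
    simp
  set φ : (⋀[K]^n (MonoidAlgebra K C)) →ₗ[K] K := (LinearMap.fst K K M).comp e.toLinearMap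
    with hφdef
  have hφ : ∀ x, φ (sgm K g x) = φ x := by
    intro x
    rw [hφdef]
    simp only [LinearMap.comp_apply, LinearEquiv.coe_coe]
    rw [show (e : (⋀[K]^n (MonoidAlgebra K C)) → K × M) (sgm K g x)
        = LinearMap.prodMap LinearMap.id (a : M →ₗ[K] M) (e x) from he x]
    simp
  have h0' := key_lemma K p k hcard g hg h0 h1 φ hφ w hw
  rw [hφdef, LinearMap.comp_apply] at h0'
  have hone : (e w).1 = 0 := h0'
  rw [hew] at hone
  exact one_ne_zero hone
end

section
/- Let K be a field of prime characteristic p and let r be a positive integer, written r = ap + b with 0 ≤ b < p. Regard the K[X]-module M_r = K[X]/((X−1)^r) as a module over the polynomial ring K[Y] via Y ↦ X^p. Then there is an isomorphism of K[Y]-modules M_r ≅ (K[Y]/((Y−1)^a))^{⊕(p−b)} ⊕ (K[Y]/((Y−1)^{a+1}))^{⊕b}. (Equivalently: the restriction of the r-dimensional indecomposable module for a cyclic p-group C over K to the subgroup of index p in C decomposes as (p−b) copies of the a-dimensional indecomposable plus b copies of the (a+1)-dimensional indecomposable.) -/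
open Polynomial

noncomputable section AuxRIC

variable (K : Type) [Field K]

/-- The substitution `X ↦ X - 1` as an equivalence of quotients. -/
private noncomputable def ricShift (n : ℕ) :
    (Polynomial K ⧸ Ideal.span {(X : Polynomial K) ^ n}) ≃ₐ[K]
    (Polynomial K ⧸ Ideal.span {((X : Polynomial K) - 1) ^ n}) :=
  Ideal.quotientEquivAlg _ _ (algEquivAevalXAddC (-1 : K)) (by
    rw [Ideal.map_span, Set.image_singleton]
    congr 1
    simp [map_pow, sub_eq_add_neg])

private lemma ricShift_mk (n : ℕ) (q : Polynomial K) :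
    ricShift K n (Ideal.Quotient.mk _ q)
      = Ideal.Quotient.mk _ (aeval ((X : Polynomial K) + C (-1 : K)) q) := by
  rfl

/-- The basis `(X-1)^j`, `j < n`, of `K[X]/((X-1)^n)`. -/
private noncomputable def ricB (n : ℕ) :
    Module.Basis (Fin n) K (Polynomial K ⧸ Ideal.span {((X : Polynomial K) - 1) ^ n}) :=
  (((AdjoinRoot.powerBasis' ((monic_X (R := K)).pow n)).basis.map
      (ricShift K n).toLinearEquiv).reindex (finCongr (by simp)))

private lemma ricB_apply (n : ℕ) (j : Fin n) :
    ricB K n j = Ideal.Quotient.mk _ (((X : Polynomial K) - 1) ^ (j : ℕ)) := by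
  simp only [ricB, Module.Basis.reindex_apply, Module.Basis.map_apply]
  refine (Module.Basis.map_apply _ _ _).trans ?_
  rw [PowerBasis.basis_eq_pow]
  simp only [AdjoinRoot.powerBasis'_gen, Fin.coe_cast, finCongr_symm_apply]
  rw [← AdjoinRoot.mk_X, ← map_pow]
  refine (AlgEquiv.toLinearEquiv_apply (ricShift K n) _).trans ?_
  rw [show (AdjoinRoot.mk ((X : Polynomial K) ^ n)) ((X : Polynomial K) ^ (j : ℕ))
      = Ideal.Quotient.mk (Ideal.span {(X : Polynomial K) ^ n}) ((X : Polynomial K) ^ (j : ℕ))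
      from rfl]
  erw [ricShift_mk]
  congr 1
  simp [sub_eq_add_neg]

private lemma ricMkZero (n m : ℕ) (h : n ≤ m) :
    (Ideal.Quotient.mk (Ideal.span {((X : Polynomial K) - 1) ^ n})
      (((X : Polynomial K) - 1) ^ m)) = 0 := by
  rw [Ideal.Quotient.eq_zero_iff_mem, Ideal.mem_span_singleton]
  exact pow_dvd_pow _ h

end AuxRIC

noncomputable section MainRIC

open Polynomial

variable (K : Type) [Field K] (p a b : ℕ)

/-- The target side vector associated with the monomial `(X-1)^m`. -/
private noncomputable def ricT (hp : 0 < p) (hb : b < p) (m : ℕ) :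
    (Fin (p - b) → Polynomial K ⧸ Ideal.span {((X : Polynomial K) - 1) ^ a}) ×
    (Fin b → Polynomial K ⧸ Ideal.span {((X : Polynomial K) - 1) ^ (a + 1)}) :=
  if h : m % p < b then
    (0, Pi.single (⟨m % p, h⟩ : Fin b)
        (Ideal.Quotient.mk _ (((X : Polynomial K) - 1) ^ (m / p))))
  else
    (Pi.single (⟨m % p - b, by have := Nat.mod_lt m hp; omega⟩ : Fin (p - b))
        (Ideal.Quotient.mk _ (((X : Polynomial K) - 1) ^ (m / p))), 0)

private lemma ricT_step (hp : 0 < p) (hb : b < p) (m : ℕ) :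
    ((fun i => Ideal.Quotient.mk (Ideal.span {((X : Polynomial K) - 1) ^ a}) X *
        (ricT K p a b hp hb m).1 i,
      fun i => Ideal.Quotient.mk (Ideal.span {((X : Polynomial K) - 1) ^ (a + 1)}) X *
        (ricT K p a b hp hb m).2 i) :
      (Fin (p - b) → Polynomial K ⧸ Ideal.span {((X : Polynomial K) - 1) ^ a}) ×
      (Fin b → Polynomial K ⧸ Ideal.span {((X : Polynomial K) - 1) ^ (a + 1)}))
    = ricT K p a b hp hb (m + p) + ricT K p a b hp hb m := by
  have h1 : (m + p) % p = m % p := Nat.add_mod_right m p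
  have h2 : (m + p) / p = m / p + 1 := Nat.add_div_right m hp
  have key : ∀ (n k : ℕ),
      Ideal.Quotient.mk (Ideal.span {((X : Polynomial K) - 1) ^ n}) X *
        Ideal.Quotient.mk _ (((X : Polynomial K) - 1) ^ k)
      = Ideal.Quotient.mk _ (((X : Polynomial K) - 1) ^ (k + 1)) +
        Ideal.Quotient.mk _ (((X : Polynomial K) - 1) ^ k) := by
    intro n k
    rw [← map_mul, ← map_add]
    congr 1
    ring
  unfold ricT
  by_cases h : m % p < b
  · rw [dif_pos h, dif_pos (h1 ▸ h)]
    refine Prod.ext (by funext i; simp) ?_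
    funext i
    simp only [Prod.snd_add, Pi.add_apply]
    by_cases hi : i = (⟨m % p, h⟩ : Fin b)
    · subst hi
      rw [Pi.single_eq_same, key]
      have : (⟨(m + p) % p, h1 ▸ h⟩ : Fin b) = ⟨m % p, h⟩ := by
        exact Fin.ext h1
      rw [this, h2, Pi.single_eq_same]
    · rw [Pi.single_eq_of_ne hi, mul_zero]
      have hne : i ≠ (⟨(m + p) % p, h1 ▸ h⟩ : Fin b) := by
        intro hcon; exact hi (by rw [hcon]; exact Fin.ext h1)
      rw [Pi.single_eq_of_ne hne]
      simp
  · rw [dif_neg h, dif_neg (h1 ▸ h)]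
    refine Prod.ext ?_ (by funext i; simp)
    funext i
    simp only [Prod.fst_add, Pi.add_apply]
    set i₀ : Fin (p - b) := ⟨m % p - b, by have := Nat.mod_lt m hp; omega⟩ with hi₀
    by_cases hi : i = i₀
    · subst hi
      rw [Pi.single_eq_same, key]
      have : (⟨(m + p) % p - b, by have := Nat.mod_lt (m+p) hp; omega⟩ : Fin (p - b)) = i₀ := by
        exact Fin.ext (by simp [hi₀, h1])
      rw [this, h2, Pi.single_eq_same]
    · rw [Pi.single_eq_of_ne hi, mul_zero]
      have hne : i ≠ (⟨(m + p) % p - b, by have := Nat.mod_lt (m+p) hp; omega⟩ : Fin (p - b)) := by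
        intro hcon; exact hi (by rw [hcon]; exact Fin.ext (by simp [hi₀, h1]))
      rw [Pi.single_eq_of_ne hne]
      simp

private lemma ricT_zero (hp : 0 < p) (hb : b < p) (m : ℕ) (hm : a * p + b ≤ m) :
    ricT K p a b hp hb m = 0 := by
  have h1 := Nat.div_add_mod m p
  unfold ricT
  by_cases h : m % p < b
  · rw [dif_pos h]
    have h2 : p * a < p * (m / p) := by nlinarith
    have h3 : a + 1 ≤ m / p := Nat.lt_of_mul_lt_mul_left h2
    rw [ricMkZero K (a + 1) (m / p) h3, Pi.single_zero]
    rfl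
  · rw [dif_neg h]
    have h3 : a ≤ m / p := by
      by_contra hcon
      push_neg at hcon
      have h4 : p * (m / p) + p ≤ p * a := by
        calc p * (m / p) + p = p * (m / p + 1) := by ring
        _ ≤ p * a := Nat.mul_le_mul_left p (Nat.succ_le_of_lt hcon)
      have hmod := Nat.mod_lt m hp
      linarith
    rw [ricMkZero K a (m / p) h3, Pi.single_zero]
    rfl

end MainRIC

noncomputable section MainRIC2

open Polynomial

variable (K : Type) [Field K] (p a b : ℕ)

private def ricIota (hp : 0 < p) (hb : b < p) :
    Fin (a * p + b) ≃ ((Σ _ : Fin (p - b), Fin a) ⊕ (Σ _ : Fin b, Fin (a + 1))) where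
  toFun j :=
    if h : (j : ℕ) % p < b then
      Sum.inr ⟨⟨(j : ℕ) % p, h⟩, ⟨(j : ℕ) / p, by
        have := j.isLt
        have h4 : (j : ℕ) < (a + 1) * p := by nlinarith
        exact (Nat.div_lt_iff_lt_mul hp).mpr h4⟩⟩
    else
      Sum.inl ⟨⟨(j : ℕ) % p - b, by have := Nat.mod_lt (j : ℕ) hp; omega⟩, ⟨(j : ℕ) / p, by
        have h1 := Nat.div_add_mod (j : ℕ) p
        have h5 := j.isLt
        have h2 : p * ((j : ℕ) / p) < p * a := by nlinarith
        exact Nat.lt_of_mul_lt_mul_left h2⟩⟩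
  invFun s :=
    Sum.elim
      (fun s => ⟨b + (s.1 : ℕ) + (s.2 : ℕ) * p, by
        have h5 : (s.1 : ℕ) + b < p := by have := s.1.isLt; omega
        have h4 : ((s.2 : ℕ) + 1) * p ≤ a * p :=
          Nat.mul_le_mul_right p (Nat.succ_le_of_lt s.2.isLt)
        nlinarith⟩)
      (fun s => ⟨(s.1 : ℕ) + (s.2 : ℕ) * p, by
        have h5 : (s.1 : ℕ) < b := s.1.isLt
        have h4 : ((s.2 : ℕ) + 1) * p ≤ (a + 1) * p :=
          Nat.mul_le_mul_right p (Nat.succ_le_of_lt s.2.isLt)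
        nlinarith⟩) s
  left_inv j := by
    dsimp only
    by_cases h : (j : ℕ) % p < b
    · rw [dif_pos h]
      exact Fin.ext (by simpa using Nat.mod_add_div' (j : ℕ) p)
    · rw [dif_neg h]
      refine Fin.ext ?_
      have h1 := Nat.mod_add_div' (j : ℕ) p
      simp only [Sum.elim_inl]
      omega
  right_inv s := by
    dsimp only
    rcases s with ⟨i, k⟩ | ⟨i, k⟩
    · have hib : b + (i : ℕ) < p := by have := i.isLt; omega
      have e1 : (b + (i : ℕ) + (k : ℕ) * p) % p = b + (i : ℕ) := by
        rw [Nat.add_mul_mod_self_right]; exact Nat.mod_eq_of_lt hib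
      have e2 : (b + (i : ℕ) + (k : ℕ) * p) / p = (k : ℕ) := by
        rw [Nat.add_mul_div_right _ _ hp, Nat.div_eq_of_lt hib, zero_add]
      simp only [Sum.elim_inl]
      refine (dif_neg (show ¬ (b + (i : ℕ) + (k : ℕ) * p) % p < b by omega)).trans ?_
      refine congrArg Sum.inl (Sigma.ext (Fin.ext ?_) (heq_of_eq (Fin.ext ?_)))
      · simp only [e1]; omega
      · simp only [e2]
    · have hib : (i : ℕ) < p := lt_trans i.isLt hb
      have e1 : ((i : ℕ) + (k : ℕ) * p) % p = (i : ℕ) := by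
        rw [Nat.add_mul_mod_self_right]; exact Nat.mod_eq_of_lt hib
      have e2 : ((i : ℕ) + (k : ℕ) * p) / p = (k : ℕ) := by
        rw [Nat.add_mul_div_right _ _ hp, Nat.div_eq_of_lt hib, zero_add]
      simp only [Sum.elim_inr]
      refine (dif_pos (show ((i : ℕ) + (k : ℕ) * p) % p < b by omega)).trans ?_
      refine congrArg Sum.inr (Sigma.ext (Fin.ext ?_) (heq_of_eq (Fin.ext ?_)))
      · simp only [e1]
      · simp only [e2]

end MainRIC2

noncomputable section MainRIC3

open Polynomial

variable (K : Type) [Field K] (p a b : ℕ)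

private noncomputable def ricBt :
    Module.Basis ((Σ _ : Fin (p - b), Fin a) ⊕ (Σ _ : Fin b, Fin (a + 1))) K
      ((Fin (p - b) → Polynomial K ⧸ Ideal.span {((X : Polynomial K) - 1) ^ a}) ×
       (Fin b → Polynomial K ⧸ Ideal.span {((X : Polynomial K) - 1) ^ (a + 1)})) :=
  (Pi.basis fun _ : Fin (p - b) => ricB K a).prod (Pi.basis fun _ : Fin b => ricB K (a + 1))

private lemma ricEmk (hp : 0 < p) (hb : b < p) (m : ℕ) :
    ((ricB K (a * p + b)).equiv (ricBt K p a b) (ricIota p a b hp hb))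
      (Ideal.Quotient.mk _ (((X : Polynomial K) - 1) ^ m)) = ricT K p a b hp hb m := by
  by_cases hm : m < a * p + b
  · rw [← ricB_apply K (a * p + b) ⟨m, hm⟩, Module.Basis.equiv_apply]
    unfold ricIota ricT ricBt
    dsimp only [Equiv.coe_fn_mk]
    by_cases h : m % p < b
    · rw [dif_pos h, dif_pos h]
      refine Prod.ext ?_ ?_
      · rw [Module.Basis.prod_apply_inr_fst]
      · rw [Module.Basis.prod_apply_inr_snd, Pi.basis_apply, ricB_apply]
    · rw [dif_neg h, dif_neg h]
      refine Prod.ext ?_ ?_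
      · rw [Module.Basis.prod_apply_inl_fst, Pi.basis_apply, ricB_apply]
      · rw [Module.Basis.prod_apply_inl_snd]
  · push_neg at hm
    rw [ricMkZero K (a * p + b) m hm, LinearEquiv.map_zero, ricT_zero K p a b hp hb m hm]

end MainRIC3

/-- **Restriction of an indecomposable module for a cyclic `p`-group to the subgroup of
index `p`.**  Let `K` be a field of prime characteristic `p` and let `r = a·p + b` with
`0 ≤ b < p` be a positive integer.  Regard `M_r = K[X]/((X−1)^r)` as a module over `K[Y]`
via `Y ↦ X^p`.  Then, as `K[Y]`-modules,
`M_r ≅ (K[Y]/((Y−1)^a))^{⊕(p−b)} ⊕ (K[Y]/((Y−1)^{a+1}))^{⊕b}`.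
The isomorphism is expressed as a `K`-linear equivalence intertwining the action of `Y`
(which acts on the left by multiplication by the class of `X^p`, and on the right
componentwise by multiplication by the class of the variable). -/
theorem restriction_indecomposable_cyclic
    (K : Type) [Field K] (p : ℕ) [Fact p.Prime] [CharP K p]
    (r a b : ℕ) (hr : 0 < r) (hab : r = a * p + b) (hb : b < p) :
    ∃ e : (Polynomial K ⧸ Ideal.span {((Polynomial.X : Polynomial K) - 1) ^ r}) ≃ₗ[K]
        ((Fin (p - b) → Polynomial K ⧸ Ideal.span {((Polynomial.X : Polynomial K) - 1) ^ a}) ×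
         (Fin b → Polynomial K ⧸ Ideal.span {((Polynomial.X : Polynomial K) - 1) ^ (a + 1)})),
      ∀ x, e (Ideal.Quotient.mk (Ideal.span {((Polynomial.X : Polynomial K) - 1) ^ r})
              (Polynomial.X ^ p) * x)
        = (fun i => Ideal.Quotient.mk (Ideal.span {((Polynomial.X : Polynomial K) - 1) ^ a})
              Polynomial.X * (e x).1 i,
           fun i => Ideal.Quotient.mk (Ideal.span {((Polynomial.X : Polynomial K) - 1) ^ (a + 1)})
              Polynomial.X * (e x).2 i) := by
  classical
  have hp : 0 < p := Nat.Prime.pos Fact.out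
  subst hab
  open Polynomial in
  refine ⟨(ricB K (a * p + b)).equiv (ricBt K p a b) (ricIota p a b hp hb), ?_⟩
  set e := (ricB K (a * p + b)).equiv (ricBt K p a b) (ricIota p a b hp hb) with he
  set Φ : ((Fin (p - b) → Polynomial K ⧸ Ideal.span {((X : Polynomial K) - 1) ^ a}) ×
       (Fin b → Polynomial K ⧸ Ideal.span {((X : Polynomial K) - 1) ^ (a + 1)})) →ₗ[K]
      ((Fin (p - b) → Polynomial K ⧸ Ideal.span {((X : Polynomial K) - 1) ^ a}) ×
       (Fin b → Polynomial K ⧸ Ideal.span {((X : Polynomial K) - 1) ^ (a + 1)})) :=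
    LinearMap.prodMap
      ((LinearMap.mulLeft K (Ideal.Quotient.mk (Ideal.span {((X : Polynomial K) - 1) ^ a}) X)).compLeft
        (Fin (p - b)))
      ((LinearMap.mulLeft K (Ideal.Quotient.mk
          (Ideal.span {((X : Polynomial K) - 1) ^ (a + 1)}) X)).compLeft (Fin b)) with hΦdef
  have hΦ : ∀ v, Φ v
      = (fun i => Ideal.Quotient.mk (Ideal.span {((X : Polynomial K) - 1) ^ a}) X * v.1 i,
         fun i => Ideal.Quotient.mk (Ideal.span {((X : Polynomial K) - 1) ^ (a + 1)}) X * v.2 i) :=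
    fun v => rfl
  have hXp : ((X : Polynomial K)) ^ p = ((X : Polynomial K) - 1) ^ p + 1 := by
    have h := add_pow_char (R := Polynomial K) (p := p) (x := (X : Polynomial K) - 1) (y := 1)
    rw [sub_add_cancel, one_pow] at h
    exact h
  have hmul : ∀ m : ℕ,
      Ideal.Quotient.mk (Ideal.span {((X : Polynomial K) - 1) ^ (a * p + b)}) ((X : Polynomial K) ^ p)
        * Ideal.Quotient.mk _ (((X : Polynomial K) - 1) ^ m)
      = Ideal.Quotient.mk _ (((X : Polynomial K) - 1) ^ (m + p))
        + Ideal.Quotient.mk _ (((X : Polynomial K) - 1) ^ m) := by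
    intro m
    rw [← map_mul, ← map_add]
    congr 1
    rw [hXp]
    ring
  have hcomp : e.toLinearMap ∘ₗ
        LinearMap.mulLeft K (Ideal.Quotient.mk
          (Ideal.span {((X : Polynomial K) - 1) ^ (a * p + b)}) ((X : Polynomial K) ^ p))
      = Φ ∘ₗ e.toLinearMap := by
    refine Module.Basis.ext (ricB K (a * p + b)) (fun j => ?_)
    simp only [LinearMap.comp_apply, LinearMap.mulLeft_apply, LinearEquiv.coe_coe]
    rw [ricB_apply, hmul, map_add, ricEmk, ricEmk, hΦ, ricT_step K p a b hp hb (j : ℕ)]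
  intro x
  have h := LinearMap.congr_fun hcomp x
  simp only [LinearMap.comp_apply, LinearMap.mulLeft_apply, LinearEquiv.coe_coe] at h
  rw [h, hΦ]
end

section
/- Let K be a field of prime characteristic p, let C be a cyclic group of order q = p^k with k ≥ 1 and generator g, and let C̃ = ⟨g^p⟩ be the subgroup of C of index p. For 1 ≤ r ≤ q/p let Ṽ_r = K[C̃]/((g^p − 1)^r), the r-dimensional indecomposable K[C̃]-module. Then the induced module K[C] ⊗_{K[C̃]} Ṽ_r is isomorphic, as a K[C]-module, to K[C]/((g−1)^{pr}), the indecomposable K[C]-module of dimension pr. -/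
noncomputable section

variable (K : Type) [Field K] (C : Type) [CommGroup C]

/-- The group algebra `K[C̃]` of the subgroup `C̃ = ⟨g^p⟩` of index `p` of the cyclic
`p`-group `C = ⟨g⟩`. -/
abbrev SubAlg (g : C) (p : ℕ) : Type := MonoidAlgebra K (Subgroup.zpowers (g ^ p))

/-- The algebra map `K[C̃] → K[C]` induced by the inclusion `C̃ ≤ C`. -/
def inclAlgHom (g : C) (p : ℕ) : SubAlg K C g p →ₐ[K] MonoidAlgebra K C :=
  MonoidAlgebra.mapDomainAlgHom K K (Subgroup.zpowers (g ^ p)).subtype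

/-- `K[C]` as an algebra (in particular, a module) over `K[C̃]`, via the inclusion. -/
def algebraOfIncl (g : C) (p : ℕ) : Algebra (SubAlg K C g p) (MonoidAlgebra K C) :=
  (inclAlgHom K C g p).toRingHom.toAlgebra

/-- The indecomposable `K[C̃]`-module `Ṽ_r = K[C̃]/((g^p−1)^r)` of dimension `r`. -/
abbrev SubVmod (g : C) (p r : ℕ) : Type :=
  SubAlg K C g p ⧸ Ideal.span
    {((MonoidAlgebra.of K (Subgroup.zpowers (g ^ p)) ⟨g ^ p, Subgroup.mem_zpowers _⟩ :
        SubAlg K C g p) - 1) ^ r}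

/-- The indecomposable `K[C]`-module `V_s = K[C]/((g−1)^s)` of dimension `s`. -/
abbrev Vmod (g : C) (s : ℕ) : Type :=
  MonoidAlgebra K C ⧸ Ideal.span {((MonoidAlgebra.of K C g : MonoidAlgebra K C) - 1) ^ s}

set_option maxHeartbeats 1600000
set_option synthInstance.maxHeartbeats 400000

/-- **Induction of indecomposables for cyclic `p`-groups (equation (4.2) of
Bryant–Johnson).**  Let `K` be a field of prime characteristic `p`, `C` a cyclic group
of order `q = p^k` (`k ≥ 1`) with generator `g`, and `C̃ = ⟨g^p⟩` the subgroup of index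
`p`.  For `1 ≤ r ≤ q/p` the induced module `K[C] ⊗_{K[C̃]} Ṽ_r` is isomorphic, as a
`K[C]`-module, to the indecomposable `K[C]`-module `V_{pr} = K[C]/((g−1)^{pr})` of
dimension `pr`.  The isomorphism is expressed as a `K`-linear equivalence intertwining
the actions of the generator `g` (which acts on the induced module by multiplication
on the left tensor factor); together with `K`-linearity this is exactly a
`K[C]`-module isomorphism. -/
theorem induced_indecomposable_cyclic
    (p : ℕ) [Fact p.Prime] [CharP K p] [Fintype C]
    (k : ℕ) (hk : 1 ≤ k) (hcard : Fintype.card C = p ^ k)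
    (g : C) (hg : ∀ x : C, x ∈ Subgroup.zpowers g)
    (r : ℕ) (hr : 1 ≤ r) (hrq : r ≤ p ^ k / p) :
    let _inst : Algebra (SubAlg K C g p) (MonoidAlgebra K C) := algebraOfIncl K C g p
    ∃ e : (TensorProduct (SubAlg K C g p) (MonoidAlgebra K C) (SubVmod K C g p r))
            ≃ₗ[K] Vmod K C g (p * r),
      ∀ x, e (TensorProduct.map
                (LinearMap.mulLeft (SubAlg K C g p) (MonoidAlgebra.of K C g))
                LinearMap.id x)
        = Ideal.Quotient.mk _ (MonoidAlgebra.of K C g) * e x := by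
  intro _inst
  classical
  haveI : IsScalarTower K (SubAlg K C g p) (MonoidAlgebra K C) :=
    IsScalarTower.of_algebraMap_eq' (inclAlgHom K C g p).comp_algebraMap.symm
  haveI : CharP (MonoidAlgebra K C) p :=
    charP_of_injective_algebraMap (algebraMap K (MonoidAlgebra K C)).injective p
  set t : SubAlg K C g p :=
    (MonoidAlgebra.of K (Subgroup.zpowers (g ^ p)) ⟨g ^ p, Subgroup.mem_zpowers _⟩ :
      SubAlg K C g p) - 1 with ht
  set u : MonoidAlgebra K C := (MonoidAlgebra.of K C g : MonoidAlgebra K C) - 1 with hu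
  have key : algebraMap (SubAlg K C g p) (MonoidAlgebra K C) (t ^ r) = u ^ (p * r) := by
    have h1 : algebraMap (SubAlg K C g p) (MonoidAlgebra K C) t
        = MonoidAlgebra.of K C (g ^ p) - 1 := by
      show inclAlgHom K C g p t = _
      rw [ht, map_sub, map_one]
      congr 1
      show MonoidAlgebra.mapDomain _ (MonoidAlgebra.single _ 1) = _
      rw [MonoidAlgebra.mapDomain_single]
      rfl
    rw [map_pow, h1, pow_mul]
    congr 1
    rw [sub_pow_char, one_pow, ← map_pow]
  set I : Ideal (SubAlg K C g p) := Ideal.span {t ^ r} with hI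
  set J : Ideal (MonoidAlgebra K C) := Ideal.span {u ^ (p * r)} with hJ
  let mkA : MonoidAlgebra K C →ₗ[SubAlg K C g p] (Vmod K C g (p * r)) :=
    (J.mkQ).restrictScalars (SubAlg K C g p)
  have hker1 : I ≤ LinearMap.ker
      (LinearMap.toSpanSingleton (SubAlg K C g p)
        (MonoidAlgebra K C →ₗ[SubAlg K C g p] Vmod K C g (p * r)) mkA) := by
    rw [hI, Ideal.span_le, Set.singleton_subset_iff]
    rw [SetLike.mem_coe, LinearMap.mem_ker]
    ext b
    show (t ^ r • mkA) b = 0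
    rw [LinearMap.smul_apply]
    show t ^ r • Submodule.Quotient.mk b = (0 : Vmod K C g (p * r))
    rw [← Submodule.Quotient.mk_smul, Algebra.smul_def, key, Submodule.Quotient.mk_eq_zero]
    exact Ideal.mul_mem_right b J (Ideal.subset_span rfl)
  let bilin := Submodule.liftQ I (LinearMap.toSpanSingleton (SubAlg K C g p)
      (MonoidAlgebra K C →ₗ[SubAlg K C g p] Vmod K C g (p * r)) mkA) hker1
  let φ := TensorProduct.lift bilin.flip
  let x₀ : TensorProduct (SubAlg K C g p) (MonoidAlgebra K C) (SubVmod K C g p r) :=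
    (1 : MonoidAlgebra K C) ⊗ₜ[SubAlg K C g p] (Ideal.Quotient.mk I 1)
  let ψ₀ := LinearMap.toSpanSingleton (MonoidAlgebra K C)
    (TensorProduct (SubAlg K C g p) (MonoidAlgebra K C) (SubVmod K C g p r)) x₀
  have hker2 : J ≤ LinearMap.ker ψ₀ := by
    rw [hJ, Ideal.span_le, Set.singleton_subset_iff, SetLike.mem_coe, LinearMap.mem_ker]
    show u ^ (p * r) • x₀ = 0
    have : u ^ (p * r) • x₀ = (u ^ (p * r)) ⊗ₜ[SubAlg K C g p] (Ideal.Quotient.mk I 1) := by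
      rw [TensorProduct.smul_tmul', smul_eq_mul, mul_one]
    rw [this, ← key, Algebra.algebraMap_eq_smul_one, TensorProduct.smul_tmul]
    have h2 : t ^ r • (Ideal.Quotient.mk I 1 : SubVmod K C g p r) = 0 := by
      show t ^ r • Submodule.Quotient.mk 1 = (0 : SubVmod K C g p r)
      rw [← Submodule.Quotient.mk_smul, smul_eq_mul, mul_one, Submodule.Quotient.mk_eq_zero]
      exact Ideal.subset_span rfl
    rw [h2, TensorProduct.tmul_zero]
  let ψ := Submodule.liftQ J ψ₀ hker2
  have hφ : ∀ (b : MonoidAlgebra K C) (a : SubAlg K C g p),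
      φ (b ⊗ₜ[SubAlg K C g p] Ideal.Quotient.mk I a)
        = Submodule.Quotient.mk (a • b) := by
    intro b a
    show bilin.flip b (Ideal.Quotient.mk I a) = _
    rw [LinearMap.flip_apply]
    show bilin (Submodule.Quotient.mk a) b = _
    rw [Submodule.liftQ_apply, LinearMap.toSpanSingleton_apply, LinearMap.smul_apply]
    show a • Submodule.Quotient.mk b = _
    exact (Submodule.Quotient.mk_smul _ _ _).symm
  have hψ : ∀ b : MonoidAlgebra K C,
      ψ (Submodule.Quotient.mk b) = b ⊗ₜ[SubAlg K C g p] (Ideal.Quotient.mk I 1) := by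
    intro b
    rw [Submodule.liftQ_apply, LinearMap.toSpanSingleton_apply]
    show b • x₀ = _
    rw [TensorProduct.smul_tmul', smul_eq_mul, mul_one]
  refine ⟨LinearEquiv.ofLinear (φ.restrictScalars K) (ψ.restrictScalars K) ?_ ?_, ?_⟩
  · apply LinearMap.ext
    intro x
    obtain ⟨b, rfl⟩ := Submodule.Quotient.mk_surjective J x
    simp only [LinearMap.coe_comp, Function.comp_apply, LinearMap.restrictScalars_apply,
      LinearMap.id_coe, id_eq]
    rw [hψ, hφ, one_smul]
  · apply LinearMap.ext
    intro x
    simp only [LinearMap.coe_comp, Function.comp_apply, LinearMap.restrictScalars_apply,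
      LinearMap.id_coe, id_eq]
    induction x using TensorProduct.induction_on with
    | zero => simp
    | add x y hx hy => rw [map_add, map_add, hx, hy]
    | tmul b m =>
      obtain ⟨a, rfl⟩ := Ideal.Quotient.mk_surjective m
      rw [hφ, hψ, TensorProduct.smul_tmul]
      congr 1
      show Submodule.Quotient.mk (a • (1 : SubAlg K C g p)) = _
      rw [smul_eq_mul, mul_one]
      rfl
  · intro x
    induction x using TensorProduct.induction_on with
    | zero => simp
    | add x y hx hy => simp only [map_add, hx, hy, mul_add]
    | tmul b m =>
      obtain ⟨a, rfl⟩ := Ideal.Quotient.mk_surjective m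
      rw [TensorProduct.map_tmul]
      simp only [LinearMap.mulLeft_apply, LinearMap.id_coe, id_eq,
        LinearEquiv.ofLinear_apply, LinearMap.restrictScalars_apply]
      rw [hφ, hφ]
      show Ideal.Quotient.mk J (a • (MonoidAlgebra.of K C g * b))
        = Ideal.Quotient.mk J (MonoidAlgebra.of K C g) * Ideal.Quotient.mk J (a • b)
      rw [← map_mul]
      congr 1
      rw [Algebra.smul_def, Algebra.smul_def]
      ring


end
end

section
/- Let K be a field, G a group, and V a finite-dimensional K-linear representation of G of dimension r. For every j with 0 ≤ j ≤ r, the multiplication map of the exterior algebra induces an isomorphism of representations of G: ⋀^j V ≅ Hom_K(⋀^{r−j} V, ⋀^r V), where G acts on ⋀^j V, ⋀^{r−j} V and ⋀^r V by the induced actions and on the Hom-space by (g·f)(x) = g·f(g^{-1}·x). -/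
/-! Auxiliary development: standard basis of exterior powers. -/

open ExteriorAlgebra

section Dev
variable {K V : Type} [Field K] [AddCommGroup V] [Module K V] {r : ℕ} (b : Module.Basis (Fin r) K V)

noncomputable def wB (s : Finset (Fin r)) : ExteriorAlgebra K V :=
  ιMulti K s.card fun i => b (s.orderIsoOfFin rfl i)

lemma wB_eq (s : Finset (Fin r)) {n : ℕ} (h : s.card = n) :
    wB b s = ιMulti K n fun i => b (s.orderIsoOfFin h i) := by subst h; rfl

lemma wB_mem (s : Finset (Fin r)) {n : ℕ} (hs : s.card = n) : wB b s ∈ ⋀[K]^n V := by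
  subst hs; exact ιMulti_range K s.card (Set.mem_range_self _)

lemma ιMulti_mul {m n : ℕ} (u : Fin m → V) (v : Fin n → V) :
    (ιMulti K m u : ExteriorAlgebra K V) * ιMulti K n v = ιMulti K (m + n) (Fin.append u v) := by
  rw [ιMulti_apply, ιMulti_apply, ιMulti_apply, ← List.prod_append, ← List.ofFn_fin_append]
  refine congrArg List.prod (congrArg List.ofFn ?_)
  funext i
  refine Fin.addCases (fun i => ?_) (fun i => ?_) i <;>
    simp [Fin.append_left, Fin.append_right]

lemma image_orderIsoOfFin (s : Finset (Fin r)) {n : ℕ} (hs : s.card = n) :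
    Finset.image (fun i => (s.orderIsoOfFin hs i : Fin r)) Finset.univ = s := by
  ext x
  simp only [Finset.mem_image, Finset.mem_univ, true_and]
  constructor
  · rintro ⟨i, rfl⟩; exact (s.orderIsoOfFin hs i).2
  · intro hx; exact ⟨(s.orderIsoOfFin hs).symm ⟨x, hx⟩, by simp⟩

lemma ιMulti_inj_eq {n : ℕ} (f : Fin n → Fin r) (hf : Function.Injective f) :
    ∃ c : K, (c = 1 ∨ c = -1) ∧
      ιMulti K n (fun i => b (f i)) = c • wB b (Finset.image f Finset.univ) := by
  set s := Finset.image f Finset.univ with hs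
  have hcard : s.card = n := by
    rw [hs, Finset.card_image_of_injective _ hf, Finset.card_univ, Fintype.card_fin]
  set g := s.orderIsoOfFin hcard with hg
  have hmem : ∀ i, f i ∈ s := fun i => Finset.mem_image.2 ⟨i, Finset.mem_univ i, rfl⟩
  have hτinj : Function.Injective fun i => g.symm ⟨f i, hmem i⟩ := by
    intro i j h
    apply hf
    have := congrArg (fun x => (g x : Fin r)) h
    simpa using this
  set σ : Equiv.Perm (Fin n) := Equiv.ofBijective _ (Finite.injective_iff_bijective.1 hτinj)
  have hfg : ∀ i, f i = (g (σ i) : Fin r) := by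
    intro i
    show f i = (g (g.symm ⟨f i, hmem i⟩) : Fin r)
    simp
  have hw : wB b s = ιMulti K n (fun i => b (g i : Fin r)) := wB_eq b s hcard
  have key : ιMulti K n (fun i => b (f i)) =
      Equiv.Perm.sign σ • ιMulti K n (fun i => b (g i : Fin r)) := by
    rw [← AlternatingMap.map_perm]
    congr 1
    ext i
    simp only [Function.comp]
    rw [← hfg i]
  rcases Int.units_eq_one_or (Equiv.Perm.sign σ) with h1 | h1 <;> rw [h1] at key
  · exact ⟨1, Or.inl rfl, by rw [key, one_smul, one_smul, hw]⟩
  · refine ⟨-1, Or.inr rfl, ?_⟩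
    rw [key, hw]
    simp [Units.smul_def]

end Dev

section Dev2
variable {K V : Type} [Field K] [AddCommGroup V] [Module K V] {r : ℕ} (b : Module.Basis (Fin r) K V)

lemma comp_append {α β : Type*} {m n : ℕ} (g : α → β) (u : Fin m → α) (v : Fin n → α) :
    Fin.append (fun i => g (u i)) (fun i => g (v i)) = fun i => g (Fin.append u v i) := by
  funext i
  refine Fin.addCases (fun i => ?_) (fun i => ?_) i <;>
    simp [Fin.append_left, Fin.append_right]

lemma wB_mul (s t : Finset (Fin r)) :
    wB b s * wB b t =
      ιMulti K (s.card + t.card)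
        (fun i => b (Fin.append (fun i => (s.orderIsoOfFin rfl i : Fin r))
          (fun i => (t.orderIsoOfFin rfl i : Fin r)) i)) := by
  rw [wB, wB, ιMulti_mul]
  congr 1
  exact comp_append b _ _

lemma wB_mul_of_not_disjoint {s t : Finset (Fin r)} (h : ¬ Disjoint s t) :
    wB b s * wB b t = 0 := by
  rw [wB_mul]
  obtain ⟨x, hxs, hxt⟩ := Finset.not_disjoint_iff.1 h
  set gs := s.orderIsoOfFin (rfl : s.card = s.card)
  set gt := t.orderIsoOfFin (rfl : t.card = t.card)
  set i := gs.symm ⟨x, hxs⟩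
  set j := gt.symm ⟨x, hxt⟩
  refine AlternatingMap.map_eq_zero_of_eq _ _
    (i := Fin.castAdd t.card i) (j := Fin.natAdd s.card j) ?_ ?_
  · rw [Fin.append_left, Fin.append_right]
    congr 1
    show ((gs (gs.symm ⟨x, hxs⟩) : {y // y ∈ s}) : Fin r) = ((gt (gt.symm ⟨x, hxt⟩)) : Fin r)
    simp
  · intro hc
    have h1 : (Fin.castAdd t.card i).val < s.card := i.2
    have h2 : s.card ≤ (Fin.natAdd s.card j).val := Nat.le_add_right _ _
    rw [hc] at h1
    omega

lemma wB_mul_of_disjoint {s t : Finset (Fin r)} (h : Disjoint s t) :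
    ∃ c : K, (c = 1 ∨ c = -1) ∧ wB b s * wB b t = c • wB b (s ∪ t) := by
  rw [wB_mul]
  set gs := s.orderIsoOfFin (rfl : s.card = s.card) with hgs
  set gt := t.orderIsoOfFin (rfl : t.card = t.card) with hgt
  set F : Fin (s.card + t.card) → Fin r :=
    Fin.append (fun i => (gs i : Fin r)) (fun i => (gt i : Fin r)) with hF
  have hFs : ∀ i, F (Fin.castAdd t.card i) = (gs i : Fin r) := fun i => Fin.append_left _ _ _
  have hFt : ∀ i, F (Fin.natAdd s.card i) = (gt i : Fin r) := fun i => Fin.append_right _ _ _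
  have himg : Finset.image F Finset.univ = s ∪ t := by
    ext x
    simp only [Finset.mem_image, Finset.mem_univ, true_and, Finset.mem_union]
    constructor
    · rintro ⟨k, rfl⟩
      refine Fin.addCases (fun k' => ?_) (fun k' => ?_) k
      · exact Or.inl (hFs k' ▸ (gs k').2)
      · exact Or.inr (hFt k' ▸ (gt k').2)
    · rintro (hx | hx)
      · exact ⟨Fin.castAdd t.card (gs.symm ⟨x, hx⟩), by rw [hFs]; simp⟩
      · exact ⟨Fin.natAdd s.card (gt.symm ⟨x, hx⟩), by rw [hFt]; simp⟩
  have hcard : (Finset.image F Finset.univ).card = (Finset.univ : Finset (Fin (s.card + t.card))).card := by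
    rw [himg, Finset.card_union_of_disjoint h]
    simp
  have hinj : Function.Injective F := by
    have := Finset.card_image_iff.1 hcard
    intro a b hab
    exact this (Finset.mem_coe.2 (Finset.mem_univ a)) (Finset.mem_coe.2 (Finset.mem_univ b)) hab
  obtain ⟨c, hc, hval⟩ := ιMulti_inj_eq b F hinj
  exact ⟨c, hc, by rw [hval, himg]⟩

end Dev2

section Dev3
variable {K V : Type} [Field K] [AddCommGroup V] [Module K V] {r : ℕ} (b : Module.Basis (Fin r) K V)

lemma wB_univ_ne_zero : wB b (Finset.univ : Finset (Fin r)) ≠ 0 := by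
  classical
  set Φ : ExteriorAlgebra K V →ₗ[K] K :=
    ExteriorAlgebra.liftAlternating (Pi.single r b.det) with hΦ
  have hcard : (Finset.univ : Finset (Fin r)).card = r := by simp
  have hwB : wB b Finset.univ =
      ιMulti K r (fun i => b ((Finset.univ.orderIsoOfFin hcard) i : Fin r)) := wB_eq b _ hcard
  set e : Fin r → Fin r := fun i => ((Finset.univ.orderIsoOfFin hcard) i : Fin r) with he
  have heinj : Function.Injective e := by
    intro i j hij
    exact (Finset.univ.orderIsoOfFin hcard).injective (Subtype.coe_injective hij)
  set σ : Equiv.Perm (Fin r) := Equiv.ofBijective e (Finite.injective_iff_bijective.1 heinj)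
  have hΦw : Φ (wB b Finset.univ) = b.det (fun i => b (e i)) := by
    rw [hwB, hΦ, ExteriorAlgebra.liftAlternating_apply_ιMulti, Pi.single_eq_same]
  have hdet : b.det (fun i => b (e i)) = Equiv.Perm.sign σ • (1 : K) := by
    rw [← b.det_self]
    have : (fun i => b (e i)) = (⇑b ∘ ⇑σ) := rfl
    rw [this, ← AlternatingMap.map_perm]
  intro hzero
  rw [hzero, map_zero] at hΦw
  rcases Int.units_eq_one_or (Equiv.Perm.sign σ) with h1 | h1 <;>
    rw [h1] at hdet <;> simp [Units.smul_def] at hdet <;> rw [hdet] at hΦw <;>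
      simp at hΦw

/-- cancellation: pairing a combination with the complement of `s₀` extracts `c s₀`. -/
lemma coeff_eq_zero_of_mul_compl {n : ℕ} (c : {s : Finset (Fin r) // s.card = n} → K)
    (s₀ : {s : Finset (Fin r) // s.card = n})
    (h : (∑ s, c s • wB b s.1) * wB b (s₀.1ᶜ) = 0) : c s₀ = 0 := by
  classical
  rw [Finset.sum_mul] at h
  have hterm : ∀ s : {s : Finset (Fin r) // s.card = n}, s ≠ s₀ →
      (c s • wB b s.1) * wB b (s₀.1ᶜ) = 0 := by
    intro s hs
    rw [smul_mul_assoc, wB_mul_of_not_disjoint, smul_zero]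
    intro hdisj
    have hsub : s.1 ⊆ s₀.1 := by
      intro x hx
      by_contra hx0
      exact (Finset.disjoint_left.1 hdisj hx) (Finset.mem_compl.2 hx0)
    have : s.1 = s₀.1 := Finset.eq_of_subset_of_card_le hsub (by rw [s.2, s₀.2])
    exact hs (Subtype.ext this)
  rw [Finset.sum_eq_single s₀ (fun s _ hs => hterm s hs) (by simp)] at h
  obtain ⟨ε, hε, hmul⟩ := wB_mul_of_disjoint b (disjoint_compl_right : Disjoint s₀.1 s₀.1ᶜ)
  rw [smul_mul_assoc, hmul, Finset.union_compl, smul_smul] at h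
  have : c s₀ * ε = 0 := by
    by_contra hne
    exact wB_univ_ne_zero b ((smul_eq_zero.1 h).resolve_left hne)
  rcases hε with rfl | rfl
  · simpa using this
  · have := mul_eq_zero.1 this
    simpa using this

/-- spanning -/
lemma span_wB (n : ℕ) :
    Submodule.span K (Set.range fun s : {s : Finset (Fin r) // s.card = n} => wB b s.1)
      = ⋀[K]^n V := by
  classical
  refine le_antisymm (Submodule.span_le.2 ?_) ?_
  · rintro _ ⟨s, rfl⟩
    exact wB_mem b s.1 s.2
  · rw [← ExteriorAlgebra.ιMulti_span_fixedDegree]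
    refine Submodule.span_le.2 ?_
    rintro _ ⟨v, rfl⟩
    have hv0 : v = fun i => ∑ k : Fin r, b.repr (v i) k • b k :=
      funext fun i => (b.sum_repr (v i)).symm
    have hv : (ιMulti K n) v =
        (ιMulti K n (M := V)).toMultilinearMap (fun i => ∑ k : Fin r, b.repr (v i) k • b k) := by
      rw [← hv0]; rfl
    rw [hv, MultilinearMap.map_sum]
    refine Submodule.sum_mem _ ?_
    intro p _
    have hsmul : (ιMulti K n (M := V)).toMultilinearMap (fun i => b.repr (v i) (p i) • b (p i))
        = (∏ i, b.repr (v i) (p i)) • ιMulti K n (fun i => b (p i)) :=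
      MultilinearMap.map_smul_univ _ _ _
    rw [hsmul]
    refine Submodule.smul_mem _ _ ?_
    by_cases hp : Function.Injective p
    · obtain ⟨ε, _, hval⟩ := ιMulti_inj_eq b p hp
      rw [hval]
      refine Submodule.smul_mem _ _ (Submodule.subset_span ?_)
      have hc : (Finset.image p Finset.univ).card = n := by
        rw [Finset.card_image_of_injective _ hp, Finset.card_univ, Fintype.card_fin]
      exact ⟨⟨Finset.image p Finset.univ, hc⟩, rfl⟩
    · obtain ⟨i, j, hij, hne⟩ := Function.not_injective_iff.1 hp
      have : ιMulti K n (fun i => b (p i)) = 0 :=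
        AlternatingMap.map_eq_zero_of_eq _ _ (by rw [hij]) hne
      rw [this]
      exact Submodule.zero_mem _

end Dev3

section Dev4
variable {K V : Type} [Field K] [AddCommGroup V] [Module K V] {r : ℕ}
variable (b : Module.Basis (Fin r) K V)

noncomputable def WB (n : ℕ) : {s : Finset (Fin r) // s.card = n} → (⋀[K]^n V) :=
  fun s => ⟨wB b s.1, wB_mem b s.1 s.2⟩

lemma linearIndependent_wB (n : ℕ) :
    LinearIndependent K (fun s : {s : Finset (Fin r) // s.card = n} => wB b s.1) := by
  classical
  refine Fintype.linearIndependent_iff.2 (fun g hg s => ?_)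
  exact coeff_eq_zero_of_mul_compl b g s (by rw [hg, zero_mul])

lemma linearIndependent_WB (n : ℕ) : LinearIndependent K (WB b n) :=
  LinearIndependent.of_comp ((⋀[K]^n V).subtype) (linearIndependent_wB b n)

lemma span_WB (n : ℕ) : Submodule.span K (Set.range (WB b n)) = ⊤ := by
  apply Submodule.map_injective_of_injective ((⋀[K]^n V).injective_subtype)
  rw [Submodule.map_span, Submodule.map_top, Submodule.range_subtype, ← Set.range_comp]
  exact span_wB b n

noncomputable def basisW (n : ℕ) : Module.Basis {s : Finset (Fin r) // s.card = n} K (⋀[K]^n V) :=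
  Module.Basis.mk (linearIndependent_WB b n) (span_WB b n).ge

lemma finrank_extPower (b : Module.Basis (Fin r) K V) (n : ℕ) : Module.finrank K (⋀[K]^n V) = r.choose n := by
  classical
  rw [Module.finrank_eq_card_basis (basisW b n), Fintype.card_finset_len, Fintype.card_fin]

lemma findim_extPower (b : Module.Basis (Fin r) K V) (n : ℕ) : FiniteDimensional K (⋀[K]^n V) :=
  (basisW b n).finiteDimensional_of_finite

end Dev4

/-- **Exterior-power duality for representations.**  Let `K` be a field, `G` a group and
`V` a finite-dimensional `K`-linear representation of `G` of dimension `r`.  For every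
`0 ≤ j ≤ r` the multiplication map of the exterior algebra induces an isomorphism of
representations `⋀^j V ≅ Hom_K(⋀^{r−j} V, ⋀^r V)`, where `G` acts on the `Hom`-space by
`(g · f)(x) = g · f(g⁻¹ · x)`.  The isomorphism is expressed as a `K`-linear equivalence
`e` satisfying `e x y = x * y` (multiplication in the exterior algebra) which
intertwines the `G`-actions. -/
theorem exteriorPower_duality
    (K : Type) [Field K] (G : Type) [Group G]
    (V : Type) [AddCommGroup V] [Module K V] [FiniteDimensional K V]
    (r : ℕ) (hr : Module.finrank K V = r)
    (ρ : Representation K G V) (j : ℕ) (hj : j ≤ r) :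
    ∃ e : (⋀[K]^j V) ≃ₗ[K] ((⋀[K]^(r - j) V) →ₗ[K] (⋀[K]^r V)),
      (∀ (x : ⋀[K]^j V) (y : ⋀[K]^(r - j) V),
        ((e x y : ⋀[K]^r V) : ExteriorAlgebra K V)
          = (x : ExteriorAlgebra K V) * (y : ExteriorAlgebra K V)) ∧
      (∀ (s : G) (x : ⋀[K]^j V),
        e (epMap j (ρ s : V →ₗ[K] V) x)
          = (epMap r (ρ s : V →ₗ[K] V)).comp
              ((e x).comp (epMap (r - j) (ρ s⁻¹ : V →ₗ[K] V)))) := by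
  classical
  have b : Module.Basis (Fin r) K V := (Module.finBasis K V).reindex (finCongr hr)
  haveI F1 : FiniteDimensional K (⋀[K]^j V) := findim_extPower b j
  haveI F2 : FiniteDimensional K (⋀[K]^(r - j) V) := findim_extPower b (r - j)
  haveI F3 : FiniteDimensional K (⋀[K]^r V) := findim_extPower b r
  have hjr : j + (r - j) = r := Nat.add_sub_cancel' hj
  have hmem : ∀ (x : ⋀[K]^j V) (y : ⋀[K]^(r - j) V),
      (x : ExteriorAlgebra K V) * (y : ExteriorAlgebra K V) ∈ ⋀[K]^r V := by
    intro x y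
    have h := Submodule.mul_mem_mul x.2 y.2
    rwa [← pow_add, hjr] at h
  set m₀ : (⋀[K]^j V) →ₗ[K] ((⋀[K]^(r - j) V) →ₗ[K] (⋀[K]^r V)) :=
    LinearMap.mk₂ K (fun x y => (⟨(x : ExteriorAlgebra K V) * y, hmem x y⟩ : ⋀[K]^r V))
      (fun x x' y => Subtype.ext (by simp [add_mul]))
      (fun c x y => Subtype.ext (by simp [smul_mul_assoc]))
      (fun x y y' => Subtype.ext (by simp [mul_add]))
      (fun c x y => Subtype.ext (by simp [mul_smul_comm])) with hm₀
  have hker : ∀ x, m₀ x = 0 → x = 0 := by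
    intro x hx0
    set c := (basisW b j).repr x with hc
    have hx : ∑ s, c s • basisW b j s = x := Module.Basis.sum_repr (basisW b j) x
    have hcoe : (x : ExteriorAlgebra K V) = ∑ s, c s • wB b s.1 := by
      have h1 := congrArg ((⋀[K]^j V).subtype) hx.symm
      simp only [map_sum, map_smul] at h1
      convert h1 using 2 with s _
      congr 1
      rw [basisW, Module.Basis.mk_apply]
      rfl
    have hzero : ∀ s₀ : {s : Finset (Fin r) // s.card = j}, c s₀ = 0 := by
      intro s₀
      have hs₀c : (s₀.1ᶜ).card = r - j := by
        rw [Finset.card_compl, Fintype.card_fin, s₀.2]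
      have h1 : m₀ x ⟨wB b s₀.1ᶜ, wB_mem b _ hs₀c⟩ = 0 := by rw [hx0]; rfl
      have h2 : (x : ExteriorAlgebra K V) * wB b s₀.1ᶜ = 0 := congrArg Subtype.val h1
      rw [hcoe] at h2
      exact coeff_eq_zero_of_mul_compl b c s₀ h2
    rw [← hx]
    simp [hzero]
  have hinj : Function.Injective m₀ :=
    (injective_iff_map_eq_zero m₀).2 hker
  have hfr : Module.finrank K (⋀[K]^j V)
      = Module.finrank K ((⋀[K]^(r - j) V) →ₗ[K] (⋀[K]^r V)) := by
    rw [Module.finrank_linearMap, finrank_extPower b, finrank_extPower b, finrank_extPower b,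
      Nat.choose_self, mul_one, Nat.choose_symm hj]
  have hsurj : Function.Surjective m₀ :=
    by
      have key := LinearMap.injective_iff_surjective_of_finrank_eq_finrank (K := K) (V := ⋀[K]^j V) (V₂ := (⋀[K]^(r - j) V) →ₗ[K] (⋀[K]^r V)) hfr (f := m₀)
      exact key.1 hinj
  refine ⟨LinearEquiv.ofBijective m₀ ⟨hinj, hsurj⟩, fun x y => rfl, ?_⟩
  intro s x
  apply LinearMap.ext
  intro y
  apply Subtype.ext
  show (ExteriorAlgebra.map (ρ s : V →ₗ[K] V) (x : ExteriorAlgebra K V))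
        * (y : ExteriorAlgebra K V)
      = ExteriorAlgebra.map (ρ s : V →ₗ[K] V)
          ((x : ExteriorAlgebra K V)
            * ExteriorAlgebra.map (ρ s⁻¹ : V →ₗ[K] V) (y : ExteriorAlgebra K V))
  rw [map_mul]
  congr 1
  have hcomp : (ρ s : V →ₗ[K] V) ∘ₗ (ρ s⁻¹ : V →ₗ[K] V) = LinearMap.id := by
    ext v
    show (ρ s * ρ s⁻¹) v = v
    rw [← map_mul, mul_inv_cancel, map_one]
    rfl
  rw [← AlgHom.comp_apply, ExteriorAlgebra.map_comp_map, hcomp, ExteriorAlgebra.map_id]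
  rfl
end

section
/- Let p be a prime and let m and d be positive integers with d dividing m and d dividing p − 1. In the quotient ring R = ℤ[x]/(x^m − 1), let w denote the class of x^{m/d} (an element of multiplicative order d). Then the element 1 + w + w² + ⋯ + w^{p−1} of R is not a zero divisor: for every u ∈ R, if u·(1 + w + ⋯ + w^{p−1}) = 0 then u = 0. -/
/-- **A non-zero-divisor in `ℤ[x]/(x^m − 1)`.**
Let `p` be a prime and let `m`, `d` be positive integers with `d ∣ m` and `d ∣ p − 1`.
In `R = ℤ[x]/(x^m − 1)` let `w` be the class of `x^(m/d)` (an element of multiplicative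
order `d`).  Then `1 + w + w² + ⋯ + w^(p−1)` is not a zero divisor: any `u ∈ R` with
`u · (1 + w + ⋯ + w^(p−1)) = 0` satisfies `u = 0`. -/
theorem not_zeroDivisor_geomSum_in_cyclicGroupRing
    (p m d : ℕ) (hp : p.Prime) (hm : 0 < m) (hd : 0 < d)
    (hdm : d ∣ m) (hdp : d ∣ p - 1)
    (u : Polynomial ℤ ⧸ Ideal.span {(Polynomial.X : Polynomial ℤ) ^ m - 1}) :
    u * (∑ i ∈ Finset.range p,
        (Ideal.Quotient.mk (Ideal.span {(Polynomial.X : Polynomial ℤ) ^ m - 1})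
          (Polynomial.X ^ (m / d))) ^ i) = 0 → u = 0 := by
  intro h
  have hp2 := hp.two_le
  let I : Ideal (Polynomial ℤ) := Ideal.span {(Polynomial.X : Polynomial ℤ) ^ m - 1}
  set w : Polynomial ℤ ⧸ I := Ideal.Quotient.mk I (Polynomial.X ^ (m / d)) with hw
  -- the quotient is a free ℤ-module (power basis since X^m - 1 is monic)
  have hmonic : (Polynomial.X ^ m - 1 : Polynomial ℤ).Monic := by
    simpa using Polynomial.monic_X_pow_sub_C (1 : ℤ) hm.ne'
  have hnzsd : NoZeroSMulDivisors ℤ (Polynomial ℤ ⧸ I) :=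
    ⟨fun h => ((AdjoinRoot.powerBasis' hmonic).basis.smul_eq_zero).mp h⟩
  -- w ^ d = 1
  have hX : (Ideal.Quotient.mk I) ((Polynomial.X : Polynomial ℤ) ^ m) = 1 := by
    have h0 : (Ideal.Quotient.mk I) ((Polynomial.X : Polynomial ℤ) ^ m - 1) = 0 :=
      Ideal.Quotient.eq_zero_iff_mem.2 (Ideal.subset_span rfl)
    have := sub_eq_zero.mp (by simpa [map_sub] using h0)
    simpa using this
  have hwd : w ^ d = 1 := by
    rw [hw, ← map_pow, ← pow_mul, Nat.div_mul_cancel hdm, hX]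
  set N : Polynomial ℤ ⧸ I := ∑ i ∈ Finset.range d, w ^ i with hN
  have hNw : N * w = N := by
    have := geom_sum_mul w d
    rw [hwd, sub_self, mul_sub, mul_one, sub_eq_zero] at this
    exact this
  have hNpow : ∀ j : ℕ, N * w ^ j = N := by
    intro j
    induction j with
    | zero => simp
    | succ j ih => rw [pow_succ, ← mul_assoc, ih, hNw]
  -- sums of full periods
  have hperiod : ∀ k : ℕ, ∑ i ∈ Finset.range (d * k), w ^ i = k • N := by
    intro k
    induction k with
    | zero => simp
    | succ k ih =>
      rw [Nat.mul_succ, Finset.sum_range_add, ih]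
      have : ∀ i ∈ Finset.range d, w ^ (d * k + i) = w ^ i := by
        intro i _
        rw [pow_add, pow_mul, hwd, one_pow, one_mul]
      rw [Finset.sum_congr rfl this, ← hN, succ_nsmul]
  obtain ⟨k, hk⟩ := hdp
  have hpk : p = d * k + 1 := by omega
  -- the geometric sum equals k • N + 1
  have hG : (∑ i ∈ Finset.range p, w ^ i) = k • N + 1 := by
    rw [hpk, Finset.sum_range_succ, hperiod, pow_mul, hwd, one_pow]
  -- multiplying the geometric sum by N gives p • N
  have hGN : (∑ i ∈ Finset.range p, w ^ i) * N = p • N := by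
    rw [Finset.sum_mul]
    have : ∀ i ∈ Finset.range p, w ^ i * N = N := by
      intro i _
      rw [mul_comm]; exact hNpow i
    rw [Finset.sum_congr rfl this, Finset.sum_const, Finset.card_range]
  -- from the hypothesis, p • (u * N) = 0
  have h' : u * (∑ i ∈ Finset.range p, w ^ i) = 0 := h
  have hun : u * N = 0 := by
    have h2 : (p : ℤ) • (u * N) = 0 := by
      have := congrArg (· * N) h'
      simp only [mul_assoc, hGN, zero_mul] at this
      rw [mul_smul_comm] at this
      simpa using this
    rcases ((AdjoinRoot.powerBasis' hmonic).basis.smul_eq_zero).mp h2 with h3 | h3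
    · exact absurd (by exact_mod_cast h3) (Nat.cast_ne_zero.mpr hp.ne_zero)
    · exact h3
  have := h'
  rw [hG, mul_add, mul_one, mul_smul_comm, hun, smul_zero, zero_add] at this
  exact this
end
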